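/- arXiv:1506.03859 — 2 statements merged into one kernel-verified Lean document; each statement's English description precedes it below -/
import Mathlib

section
/- Let $S$ be the inverse system $\mathbb{Z} \xleftarrow{\times 3} \mathbb{Z} \xleftarrow{\times 3} \cdots$. Then $\varprojlim^1 S$ is uncountable. -/
/-- The map `Ψ((gᵢ)) = (gᵢ - 3 g_{i+1})` for the inverse system `ℤ ←×3- ℤ ←⋯`. -/
def psi : (ℕ → ℤ) →+ (ℕ → ℤ) :=
  AddMonoidHom.mk' (fun g i => g i - 3 * g (i + 1)) (by
    intro a b; funext i; simp [Pi.add_apply]; ring)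

/-- If `x N = 0` and `|x i - 3 x (i+1)| ≤ 1` for all `i`, then `x` and `h` vanish
from `N` on. -/
lemma zero_tail (x : ℕ → ℤ) (hh : ∀ i, |x i - 3 * x (i + 1)| ≤ 1)
    (N : ℕ) (hN : x N = 0) : ∀ n, N ≤ n → x n = 0 := by
  intro n hn
  induction n with
  | zero =>
    have : N = 0 := Nat.le_zero.mp hn
    rw [← this]; exact hN
  | succ m ih =>
    rcases Nat.lt_or_ge N (m + 1) with hlt | hge
    · have hxm : x m = 0 := ih (by omega)
      have := hh m
      rw [hxm] at this
      have : |3 * x (m + 1)| ≤ 1 := by simpa using this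
      rw [abs_mul] at this
      have h3 : |x (m + 1)| ≤ 0 := by
        have : (3 : ℤ) * |x (m + 1)| ≤ 1 := by simpa using this
        nlinarith [abs_nonneg (x (m + 1))]
      have := abs_nonneg (x (m + 1))
      have : |x (m + 1)| = 0 := le_antisymm h3 this
      exact abs_eq_zero.mp this
    · have : N = m + 1 := by omega
      exact this ▸ hN

lemma exists_zero (x : ℕ → ℤ) (hh : ∀ i, |x i - 3 * x (i + 1)| ≤ 1) :
    ∃ N, x N = 0 := by
  by_contra hc
  push_neg at hc
  -- natAbs strictly decreases
  have key : ∀ n, (x (n + 1)).natAbs < (x n).natAbs := by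
    intro n
    have h1 : |x n - 3 * x (n + 1)| ≤ 1 := hh n
    have hxn : x n ≠ 0 := hc n
    have hxn1 : x (n + 1) ≠ 0 := hc (n + 1)
    have a1 : 1 ≤ |x n| := Int.one_le_abs (by exact_mod_cast hxn)
    have a2 : 1 ≤ |x (n + 1)| := Int.one_le_abs (by exact_mod_cast hxn1)
    have : |x (n + 1)| < |x n| := by
      have h3 : |3 * x (n + 1)| - |x n| ≤ |x n - 3 * x (n + 1)| := by
        have := abs_sub_abs_le_abs_sub (3 * x (n + 1)) (x n)
        calc |3 * x (n + 1)| - |x n| ≤ |3 * x (n + 1) - x n| := this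
          _ = |x n - 3 * x (n + 1)| := abs_sub_comm _ _
      have : |3 * x (n + 1)| ≤ |x n| + 1 := by linarith
      rw [abs_mul] at this
      have h3abs : |(3 : ℤ)| = 3 := by norm_num
      rw [h3abs] at this
      linarith
    have := Int.natAbs_lt_natAbs_of_nonneg_of_lt (abs_nonneg (x (n + 1))) this
    simpa [Int.natAbs_abs] using this
  have mono : ∀ n, (x n).natAbs + n ≤ (x 0).natAbs := by
    intro n
    induction n with
    | zero => simp
    | succ m ih => have := key m; omega
  have := mono ((x 0).natAbs + 1)
  omega

/-- The digit sequence associated to `ε`. -/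
def dig (ε : ℕ → Bool) : ℕ → ℤ := fun i => if ε i then 1 else 0

lemma dig_eventually_eq {ε δ : ℕ → Bool} (h : dig ε - dig δ ∈ psi.range) :
    ∃ N, ∀ n, N ≤ n → ε n = δ n := by
  obtain ⟨x, hx⟩ := h
  have hx' : ∀ i, x i - 3 * x (i + 1) = dig ε i - dig δ i := by
    intro i
    have := congrFun hx i
    simpa [psi, AddMonoidHom.mk'] using this
  have hh : ∀ i, |x i - 3 * x (i + 1)| ≤ 1 := by
    intro i
    rw [hx' i]
    unfold dig
    rcases Bool.dichotomy (ε i) with h1 | h1 <;> rcases Bool.dichotomy (δ i) with h2 | h2 <;>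
      simp [h1, h2]
  obtain ⟨N, hN⟩ := exists_zero x hh
  refine ⟨N, fun n hn => ?_⟩
  have hz : x n = 0 := zero_tail x hh N hN n hn
  have hz1 : x (n + 1) = 0 := zero_tail x hh N hN (n + 1) (by omega)
  have : dig ε n - dig δ n = 0 := by rw [← hx' n, hz, hz1]; ring
  unfold dig at this
  rcases Bool.dichotomy (ε n) with h1 | h1 <;> rcases Bool.dichotomy (δ n) with h2 | h2 <;>
    simp [h1, h2] at this ⊢

/-- Sequences eventually equal to a fixed one form a countable set. -/
lemma countable_eventually_eq (ε : ℕ → Bool) :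
    Set.Countable {δ : ℕ → Bool | ∃ N, ∀ n, N ≤ n → δ n = ε n} := by
  have : {δ : ℕ → Bool | ∃ N, ∀ n, N ≤ n → δ n = ε n} =
      ⋃ N : ℕ, {δ : ℕ → Bool | ∀ n, N ≤ n → δ n = ε n} := by
    ext δ; simp [Set.mem_iUnion]
  rw [this]
  apply Set.countable_iUnion
  intro N
  rw [← Set.countable_coe_iff]
  have hinj : Function.Injective
      (fun δ : {δ : ℕ → Bool | ∀ n, N ≤ n → δ n = ε n} => (fun i : Fin N => δ.1 i)) := by
    rintro ⟨a, ha⟩ ⟨b, hb⟩ hab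
    simp only at hab
    ext1
    funext n
    show a n = b n
    rcases Nat.lt_or_ge n N with h | h
    · exact congrFun hab ⟨n, h⟩
    · rw [ha n h, hb n h]
  exact hinj.countable

/-- `lim¹` of the inverse system `ℤ ←×3- ℤ ←⋯`, i.e. the cokernel of `Ψ`,
is uncountable. -/
theorem stmt_2 : ¬ Countable ((ℕ → ℤ) ⧸ psi.range) := by
  intro hQ
  set Q := (ℕ → ℤ) ⧸ psi.range
  let f : (ℕ → Bool) → Q := fun ε => QuotientAddGroup.mk (dig ε)
  -- each fiber of f is countable
  have hfib : ∀ q : Q, Countable {δ // f δ = q} := by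
    intro q
    by_cases hne : ∃ δ0, f δ0 = q
    · obtain ⟨δ0, hδ0⟩ := hne
      have hsub : {δ : ℕ → Bool | f δ = q} ⊆
          {δ : ℕ → Bool | ∃ N, ∀ n, N ≤ n → δ n = δ0 n} := by
        intro δ hδ
        have : f δ = f δ0 := by rw [hδ, hδ0]
        have hmem : dig δ - dig δ0 ∈ psi.range := by
          have := QuotientAddGroup.eq.mp (this.symm)
          simpa [neg_add_eq_sub] using this
        exact dig_eventually_eq hmem
      have := (countable_eventually_eq δ0).mono hsub
      exact Set.countable_coe_iff.mpr this
    · push_neg at hne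
      haveI : IsEmpty {δ // f δ = q} := ⟨fun ⟨δ, hδ⟩ => hne δ hδ⟩
      infer_instance
  have : Countable ((q : Q) × {δ // f δ = q}) := by
    haveI := hfib
    infer_instance
  have hcnt : Countable (ℕ → Bool) := Countable.of_equiv _ (Equiv.sigmaFiberEquiv f)
  -- but ℕ → Bool is uncountable
  have h2 : Countable (ℕ → Prop) :=
    Countable.of_equiv _ (Equiv.arrowCongr (Equiv.refl ℕ) Equiv.propEquivBool.symm)
  have h3 : Countable (Set ℕ) := h2
  obtain ⟨g, hg⟩ := h3.exists_injective_nat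
  exact Function.cantor_injective g hg
end

section
/- (Gray's dichotomy) Let $(G_i, f_{i+1,i})$ be an inverse system of countable abelian groups indexed by $\mathbb{N}$. Then $\varprojlim^1 G_i$ is either trivial or uncountable. -/
/-- The map `Ψ((gᵢ)) = (gᵢ - fᵢ(g_{i+1}))` of an inverse system of abelian
groups indexed by `ℕ`; its cokernel is `lim¹`. -/
def Psi {G : ℕ → Type*} [∀ i, AddCommGroup (G i)] (f : ∀ i, G (i + 1) →+ G i) :
    (∀ i, G i) →+ (∀ i, G i) :=
  AddMonoidHom.mk' (fun g i => g i - f i (g (i + 1))) (by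
    intro a b; funext i; simp [Pi.add_apply, map_add]; abel)

section
variable {G : ℕ → Type*} [∀ i, AddCommGroup (G i)]

def iterf (f : ∀ i, G (i + 1) →+ G i) : ∀ (i k : ℕ), G (i + k) →+ G i
  | _, 0 => AddMonoidHom.id _
  | i, (k+1) => (iterf f i k).comp (f (i+k))

variable (f : ∀ i, G (i + 1) →+ G i)

lemma iterf_zero (i : ℕ) (x : G i) : iterf f i 0 x = x := rfl

lemma iterf_succ (i k : ℕ) (x : G (i + (k+1))) :
    iterf f i (k+1) x = iterf f i k (f (i+k) x) := rfl

omit [∀ i, AddCommGroup (G i)] in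
lemma cast_apply_g {a b : ℕ} (g : ∀ i, G i) (e : a = b) :
    cast (congrArg G e) (g a) = g b := by subst e; rfl

lemma f_cast {a b : ℕ} (e : a = b) (x : G (a+1)) :
    f b (cast (congrArg G (congrArg (· + 1) e)) x) = cast (congrArg G e) (f a x) := by
  subst e; rfl

lemma iterf_left (i k : ℕ) (x : G ((i+1) + k)) :
    iterf f i (k+1) (cast (congrArg G (Nat.succ_add i k)) x) = f i (iterf f (i+1) k x) := by
  induction k with
  | zero => rfl
  | succ k ih =>
      have e : (i+1) + k = i + (k+1) := Nat.succ_add i k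
      rw [iterf_succ]
      have hx : f (i + (k+1)) (cast (congrArg G (Nat.succ_add i (k+1))) x)
          = cast (congrArg G e) (f ((i+1)+k) x) := by
        have := f_cast f e x
        convert this using 2
      rw [hx, ih (f ((i+1)+k) x), iterf_succ]

def Im (i k : ℕ) : AddSubgroup (G i) := (iterf f i k).range

lemma Im_succ_le (i k : ℕ) : Im f i (k+1) ≤ Im f i k := by
  rintro x ⟨y, rfl⟩
  exact ⟨f (i+k) y, rfl⟩

lemma Im_anti (i : ℕ) : Antitone (Im f i) :=
  antitone_nat_of_succ_le (Im_succ_le f i)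

lemma telescope (h d : ∀ i, G i) (H : ∀ i, h i = d i + f i (h (i+1))) (i : ℕ) :
    ∀ k, h i = (∑ j ∈ Finset.range k, iterf f i j (d (i+j))) + iterf f i k (h (i+k)) := by
  intro k
  induction k with
  | zero => simp; rfl
  | succ k ih =>
      rw [Finset.sum_range_succ, iterf_succ]
      rw [ih, H (i+k), map_add]
      abel

lemma stab [∀ i, Countable (G i)] (cnt : Countable ((∀ i, G i) ⧸ (Psi f).range)) (i0 : ℕ) :
    ∃ N, ∀ k, N ≤ k → Im f i0 k = Im f i0 N := by
  by_contra hcon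
  push_neg at hcon
  have h2 : ∀ n : ℕ, ∃ n' : ℕ, n < n' ∧ Im f i0 n' < Im f i0 n := by
    intro n
    obtain ⟨k, hk, hne⟩ := hcon n
    have hkn : n ≠ k := fun h => hne (by rw [← h])
    exact ⟨k, lt_of_le_of_ne hk hkn, lt_of_le_of_ne (Im_anti f i0 hk) hne⟩
  choose nx hlt hIm using h2
  set m : ℕ → ℕ := fun k => Nat.rec 0 (fun _ prev => nx prev) k with hm
  have hmono : StrictMono m := strictMono_nat_of_lt_succ (fun k => hlt (m k))
  have hImlt : ∀ k, Im f i0 (m (k+1)) < Im f i0 (m k) := fun k => hIm (m k)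
  have hex : ∀ k, ∃ v : G (i0 + m k), iterf f i0 (m k) v ∉ Im f i0 (m (k+1)) := by
    intro k
    obtain ⟨t, htm, htn⟩ := SetLike.exists_of_lt (hImlt k)
    obtain ⟨v, hv⟩ := htm
    exact ⟨v, by rw [hv]; exact htn⟩
  choose u hu using hex
  set t : ℕ → G i0 := fun k => iterf f i0 (m k) (u k) with ht
  classical
  set a : (ℕ → Bool) → ∀ i, G i := fun ε i =>
    if hh : ∃ k, i0 + m k = i then cast (congrArg G hh.choose_spec) (if ε hh.choose then u hh.choose else 0)
    else 0 with ha
  have aval : ∀ ε k, a ε (i0 + m k) = (if ε k then u k else 0) := by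
    intro ε k
    have hex' : ∃ k', i0 + m k' = i0 + m k := ⟨k, rfl⟩
    rw [ha]
    simp only [dif_pos hex']
    have hck : hex'.choose = k := hmono.injective (Nat.add_left_cancel hex'.choose_spec)
    have key : ∀ (k' : ℕ) (e : i0 + m k' = i0 + m k) (b : Bool), k' = k →
        cast (congrArg G e) (if b then u k' else 0) = (if b then u k else 0) := by
      rintro k' e b rfl; rfl
    rw [key hex'.choose hex'.choose_spec (ε hex'.choose) hck, hck]
  have azero : ∀ (ε : ℕ → Bool) (j : ℕ), (¬ ∃ k, m k = j) → a ε (i0 + j) = 0 := by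
    intro ε j hj
    rw [ha]
    have : ¬ ∃ k, i0 + m k = i0 + j := by
      rintro ⟨k, hk⟩; exact hj ⟨k, Nat.add_left_cancel hk⟩
    simp only [dif_neg this]
  set w : (ℕ → Bool) → ℕ → G i0 := fun ε K => ∑ k ∈ Finset.range K, (if ε k then t k else 0)
    with hw
  have suma : ∀ (ε : ℕ → Bool) (K : ℕ),
      ∑ j ∈ Finset.range (m K), iterf f i0 j (a ε (i0 + j)) = w ε K := by
    intro ε K
    have hsub : (Finset.range K).image m ⊆ Finset.range (m K) := by
      intro x hx
      obtain ⟨k, hk, rfl⟩ := Finset.mem_image.mp hx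
      exact Finset.mem_range.mpr (hmono (Finset.mem_range.mp hk))
    have hzero : ∀ j ∈ Finset.range (m K), j ∉ (Finset.range K).image m →
        iterf f i0 j (a ε (i0 + j)) = 0 := by
      intro j hj hjn
      have : ¬ ∃ k, m k = j := by
        rintro ⟨k, rfl⟩
        exact hjn (Finset.mem_image.mpr ⟨k, Finset.mem_range.mpr
          (hmono.lt_iff_lt.mp (Finset.mem_range.mp hj)), rfl⟩)
      rw [azero ε j this, map_zero]
    rw [← Finset.sum_subset hsub hzero]
    rw [Finset.sum_image (fun x _ y _ h => hmono.injective h)]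
    refine Finset.sum_congr rfl (fun k _ => ?_)
    rw [aval ε k]
    rcases Bool.eq_false_or_eq_true (ε k) with hb | hb <;> simp [hb, ht]
  have hL : ∀ ε ε' : ℕ → Bool,
      (QuotientAddGroup.mk (a ε) : (∀ i, G i) ⧸ (Psi f).range) = QuotientAddGroup.mk (a ε') →
      ∃ c : G i0, ∀ K, c - (w ε' K - w ε K) ∈ Im f i0 (m K) := by
    intro ε ε' hq
    rw [QuotientAddGroup.eq] at hq
    obtain ⟨h0, hh0⟩ := hq
    have H : ∀ i, h0 i = (a ε' i - a ε i) + f i (h0 (i+1)) := by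
      intro i
      have h2 := congrFun hh0 i
      have h1 : h0 i - f i (h0 (i+1)) = a ε' i - a ε i := by
        simpa [Psi, sub_eq_neg_add, Pi.add_apply, Pi.neg_apply] using h2
      exact sub_eq_iff_eq_add.mp h1
    refine ⟨h0 i0, fun K => ?_⟩
    have htel := telescope f h0 (fun i => a ε' i - a ε i) H i0 (m K)
    have hsum : ∑ j ∈ Finset.range (m K), iterf f i0 j (a ε' (i0+j) - a ε (i0+j))
        = w ε' K - w ε K := by
      simp only [map_sub]
      rw [Finset.sum_sub_distrib, suma, suma]
    rw [hsum] at htel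
    have : h0 i0 - (w ε' K - w ε K) = iterf f i0 (m K) (h0 (i0 + m K)) := by
      rw [htel]; abel
    rw [this]
    exact ⟨h0 (i0 + m K), rfl⟩
  have hInj : ∀ (εs ε ε' : ℕ → Bool) (c : G i0),
      (∀ K, c - (w ε K - w εs K) ∈ Im f i0 (m K)) →
      (∀ K, c - (w ε' K - w εs K) ∈ Im f i0 (m K)) → ε = ε' := by
    intro εs ε ε' c hA hB
    have key : ∀ K, w ε' K - w ε K ∈ Im f i0 (m K) := by
      intro K
      have h3 := sub_mem (hA K) (hB K)
      have h4 : c - (w ε K - w εs K) - (c - (w ε' K - w εs K)) = w ε' K - w ε K := by abel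
      rwa [h4] at h3
    funext k
    induction k using Nat.strong_induction_on with
    | _ k ih =>
      have hk1 := key (k+1)
      have hsplit : w ε' (k+1) - w ε (k+1)
          = (if ε' k then t k else 0) - (if ε k then t k else 0) := by
        rw [hw]
        simp only [Finset.sum_range_succ]
        have heq : (∑ j ∈ Finset.range k, (if ε' j then t j else 0))
            = ∑ j ∈ Finset.range k, (if ε j then t j else 0) :=
          Finset.sum_congr rfl (fun j hj => by rw [ih j (Finset.mem_range.mp hj)])
        rw [heq]; abel
      rw [hsplit] at hk1
      by_contra hne
      rcases Bool.eq_false_or_eq_true (ε k) with hb | hb <;>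
        rcases Bool.eq_false_or_eq_true (ε' k) with hb' | hb' <;>
          simp [hb, hb'] at hk1 hne
      · exact hu k hk1
      · exact hu k hk1
  -- final contradiction : (ℕ → Bool) is countable
  haveI := cnt
  have hcnt : Countable (ℕ → Bool) := by
    set Q := (∀ i, G i) ⧸ (Psi f).range
    set Φ : (ℕ → Bool) → Q := fun ε => QuotientAddGroup.mk (a ε) with hΦ
    set B : Q → (ℕ → Bool) := fun q => if h : ∃ ε, Φ ε = q then h.choose else (fun _ => false)
      with hB
    have hBspec : ∀ q : Q, (∃ ε, Φ ε = q) → Φ (B q) = q := by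
      intro q hq
      rw [hB]
      simp only [dif_pos hq]
      exact hq.choose_spec
    have hCex : ∀ ε : ℕ → Bool,
        ∃ c : G i0, ∀ K, c - (w ε K - w (B (Φ ε)) K) ∈ Im f i0 (m K) :=
      fun ε => hL (B (Φ ε)) ε (hBspec (Φ ε) ⟨ε, rfl⟩)
    choose cc hcc using hCex
    have hinj : Function.Injective (fun ε => (Φ ε, cc ε) : (ℕ → Bool) → Q × G i0) := by
      intro ε ε' hp
      have h1 : Φ ε = Φ ε' := congrArg Prod.fst hp
      have h2 : cc ε = cc ε' := congrArg Prod.snd hp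
      refine hInj (B (Φ ε)) ε ε' (cc ε) (hcc ε) ?_
      rw [h1, h2]
      exact hcc ε'
    exact hinj.countable
  have : Countable (Set ℕ) :=
    Countable.of_equiv (ℕ → Bool) (Equiv.arrowCongr (Equiv.refl ℕ) Equiv.propEquivBool).symm
  obtain ⟨emb, hemb⟩ := Countable.exists_injective_nat (Set ℕ)
  exact Function.cantor_injective emb hemb
end

section
variable {G : ℕ → Type*} [∀ i, AddCommGroup (G i)] (f : ∀ i, G (i + 1) →+ G i)

lemma surj_of_stab (hst : ∀ i, ∃ N, ∀ k, N ≤ k → Im f i k = Im f i N) :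
    Function.Surjective (Psi f) := by
  intro g
  choose N hN using hst
  classical
  set c : ∀ i, ℕ → G i := fun i k => ∑ j ∈ Finset.range k, iterf f i j (g (i+j)) with hc
  set S : ∀ i : ℕ, ℕ → Set (G i) := fun i k => {y | y - c i k ∈ Im f i k} with hS
  have hcsucc : ∀ i k, c i (k+1) = c i k + iterf f i k (g (i+k)) := by
    intro i k; rw [hc]; exact Finset.sum_range_succ _ _
  have hSanti : ∀ i k, S i (k+1) ⊆ S i k := by
    intro i k y hy
    have h1 : y - c i k = (y - c i (k+1)) + iterf f i k (g (i+k)) := by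
      rw [hcsucc]; abel
    show y - c i k ∈ Im f i k
    rw [h1]
    exact add_mem (Im_succ_le f i k hy) ⟨g (i+k), rfl⟩
  have hSanti' : ∀ i k l, k ≤ l → S i l ⊆ S i k := by
    intro i k l hkl
    induction l, hkl using Nat.le_induction with
    | base => exact fun _ h => h
    | succ l hl ih => exact fun y hy => ih (hSanti i l hy)
  have hSup : ∀ i k, N i ≤ k → S i (N i) ⊆ S i k := by
    intro i k hk
    induction k, hk using Nat.le_induction with
    | base => exact fun _ h => h
    | succ k hk ih =>
        intro y hy
        have h1 : y - c i k ∈ Im f i k := ih hy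
        show y - c i (k+1) ∈ Im f i (k+1)
        have h2 : y - c i (k+1) = (y - c i k) - iterf f i k (g (i+k)) := by
          rw [hcsucc]; abel
        rw [h2, hN i (k+1) (by omega), ← hN i k hk]
        exact sub_mem h1 ⟨g (i+k), rfl⟩
  have hSall : ∀ i (y : G i), y ∈ S i (N i) → ∀ k, y ∈ S i k := by
    intro i y hy k
    rcases le_total k (N i) with h | h
    · exact hSanti' i k (N i) h hy
    · exact hSup i k h hy
  have hSne : ∀ i, c i (N i) ∈ S i (N i) := by
    intro i
    show c i (N i) - c i (N i) ∈ Im f i (N i)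
    rw [sub_self]; exact zero_mem _
  have hcleft : ∀ i k, c i (k+1) = g i + f i (c (i+1) k) := by
    intro i k
    induction k with
    | zero =>
        have h0 : c i 1 = iterf f i 0 (g (i+0)) := by
          simp only [hc, Finset.sum_range_one]
        have h1 : c (i+1) 0 = 0 := by simp only [hc, Finset.sum_range_zero]
        rw [h0, h1, map_zero]
        show iterf f i 0 (g (i+0)) = g i + 0
        exact (add_zero (g i)).symm
    | succ k ih =>
        rw [hcsucc i (k+1), ih, hcsucc (i+1) k, map_add]
        have e : (i+1)+k = i+(k+1) := Nat.succ_add i k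
        have hca : cast (congrArg G (Nat.succ_add i k)) (g ((i+1)+k)) = g (i+(k+1)) :=
          cast_apply_g g e
        have hl := iterf_left f i k (g ((i+1)+k))
        rw [hca] at hl
        rw [hl]
        abel
  have hstep : ∀ i (y : G i), (∀ k, y ∈ S i k) →
      ∃ z : G (i+1), (∀ k, z ∈ S (i+1) k) ∧ y = g i + f i z := by
    intro i y hy
    obtain ⟨x, hx⟩ := hy (N (i+1) + 1)
    set x' : G ((i+1) + N (i+1)) := cast (congrArg G (Nat.succ_add i (N (i+1))).symm) x with hx'
    have hcast : cast (congrArg G (Nat.succ_add i (N (i+1)))) x' = x := by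
      rw [hx', cast_cast]
      exact cast_eq _ x
    have hleft : iterf f i (N (i+1) + 1) x = f i (iterf f (i+1) (N (i+1)) x') := by
      rw [← hcast]
      exact iterf_left f i (N (i+1)) x'
    refine ⟨c (i+1) (N (i+1)) + iterf f (i+1) (N (i+1)) x', ?_, ?_⟩
    · apply hSall
      show (c (i+1) (N (i+1)) + iterf f (i+1) (N (i+1)) x') - c (i+1) (N (i+1))
          ∈ Im f (i+1) (N (i+1))
      rw [add_sub_cancel_left]
      exact ⟨x', rfl⟩
    · calc y = c i (N (i+1) + 1) + (y - c i (N (i+1) + 1)) := by abel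
        _ = c i (N (i+1) + 1) + iterf f i (N (i+1) + 1) x := by rw [hx]
        _ = (g i + f i (c (i+1) (N (i+1)))) + f i (iterf f (i+1) (N (i+1)) x') := by
              rw [hcleft, hleft]
        _ = g i + f i (c (i+1) (N (i+1)) + iterf f (i+1) (N (i+1)) x') := by
              rw [map_add]; abel
  let step : ∀ i : ℕ, {y : G i // ∀ k, y ∈ S i k} → {y : G (i+1) // ∀ k, y ∈ S (i+1) k} :=
    fun i y => ⟨(hstep i y.1 y.2).choose, ((hstep i y.1 y.2).choose_spec).1⟩
  let seq : ∀ i : ℕ, {y : G i // ∀ k, y ∈ S i k} :=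
    fun i => Nat.rec ⟨c 0 (N 0), hSall 0 _ (hSne 0)⟩ step i
  have hseqstep : ∀ i, (seq i).1 = g i + f i ((seq (i+1)).1) :=
    fun i => ((hstep i (seq i).1 (seq i).2).choose_spec).2
  refine ⟨fun i => (seq i).1, ?_⟩
  funext i
  show (seq i).1 - f i ((seq (i+1)).1) = g i
  rw [hseqstep i]
  abel
end

/-- Gray's dichotomy: for an inverse system of countable abelian groups indexed
by `ℕ`, the derived limit `lim¹ = coker Ψ` is either trivial or uncountable. -/
theorem stmt_3 {G : ℕ → Type*} [∀ i, AddCommGroup (G i)] [∀ i, Countable (G i)]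
    (f : ∀ i, G (i + 1) →+ G i) :
    Subsingleton ((∀ i, G i) ⧸ (Psi f).range) ∨
      ¬ Countable ((∀ i, G i) ⧸ (Psi f).range) := by
  by_cases hC : Countable ((∀ i, G i) ⧸ (Psi f).range)
  · left
    have hsurj := surj_of_stab f (fun i => stab f hC i)
    refine ⟨fun x y => ?_⟩
    obtain ⟨a, rfl⟩ := QuotientAddGroup.mk_surjective x
    obtain ⟨b, rfl⟩ := QuotientAddGroup.mk_surjective y
    rw [QuotientAddGroup.eq]
    exact AddMonoidHom.mem_range.mpr (hsurj (-a + b))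
  · right; exact hC
end
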